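/- A monoid S is finitely absorbed if and only if S has a completely simple minimal ideal whose R-classes are finite. -/

import Mathlib

def seqN {α : Type*} (r : α → α → Prop) : ℕ → α → α → Prop
  | 0, a, b => a = b
  | n + 1, a, b => ∃ c, r a c ∧ seqN r n c b

/-- One step of an `X`-sequence in a monoid `S` as a right `S`-act:
`a = x * s`, `b = y * s` with `x, y ∈ X`, `s ∈ S`. -/
def mStep {S : Type*} [Monoid S] (X : Set S) (a b : S) : Prop :=
  ∃ x ∈ X, ∃ y ∈ X, ∃ s : S, a = x * s ∧ b = y * s

/-- A monoid is right pseudo-finite if some finite `X ⊆ S` and bound `N` connect any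
two elements by an `X`-sequence of length at most `N`. -/
def MRightPF (S : Type*) [Monoid S] : Prop :=
  ∃ X : Finset S, ∃ N : ℕ, ∀ a b : S, ∃ n ≤ N, seqN (mStep (X : Set S)) n a b

/-- `L` is a left ideal of `S`. -/
def IsLeftIdeal {S : Type*} [Monoid S] (L : Set S) : Prop :=
  L.Nonempty ∧ ∀ a ∈ L, ∀ s : S, s * a ∈ L

/-- `R` is a right ideal of `S`. -/
def IsRightIdeal {S : Type*} [Monoid S] (R : Set S) : Prop :=
  R.Nonempty ∧ ∀ a ∈ R, ∀ s : S, a * s ∈ R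

/-- `I` is a two-sided ideal of `S`. -/
def IsIdeal {S : Type*} [Monoid S] (I : Set S) : Prop :=
  I.Nonempty ∧ ∀ a ∈ I, ∀ s : S, s * a ∈ I ∧ a * s ∈ I

/-- `L` is a minimal left ideal: a left ideal containing no proper left ideal. -/
def IsMinLeftIdeal {S : Type*} [Monoid S] (L : Set S) : Prop :=
  IsLeftIdeal L ∧ ∀ L' ⊆ L, IsLeftIdeal L' → L' = L

/-- `R` is a minimal right ideal: a right ideal containing no proper right ideal. -/
def IsMinRightIdeal {S : Type*} [Monoid S] (R : Set S) : Prop :=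
  IsRightIdeal R ∧ ∀ R' ⊆ R, IsRightIdeal R' → R' = R

/-- `K` is the minimal ideal of `S`: an ideal contained in every ideal. -/
def IsMinIdeal {S : Type*} [Monoid S] (K : Set S) : Prop :=
  IsIdeal K ∧ ∀ I : Set S, IsIdeal I → K ⊆ I

/-- An ideal of the subsemigroup `K` of `S` (with `K` closed under multiplication). -/
def IsRelIdeal {S : Type*} [Monoid S] (K I : Set S) : Prop :=
  I.Nonempty ∧ I ⊆ K ∧ ∀ a ∈ I, ∀ k ∈ K, k * a ∈ I ∧ a * k ∈ I

def IsRelLeftIdeal {S : Type*} [Monoid S] (K I : Set S) : Prop :=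
  I.Nonempty ∧ I ⊆ K ∧ ∀ a ∈ I, ∀ k ∈ K, k * a ∈ I

def IsRelRightIdeal {S : Type*} [Monoid S] (K I : Set S) : Prop :=
  I.Nonempty ∧ I ⊆ K ∧ ∀ a ∈ I, ∀ k ∈ K, a * k ∈ I

/-- `K` is a completely simple semigroup (as a subsemigroup of `S`): it is simple and
has a minimal left ideal and a minimal right ideal. -/
def IsCompletelySimple {S : Type*} [Monoid S] (K : Set S) : Prop :=
  (∀ I : Set S, IsRelIdeal K I → I = K) ∧
  (∃ L : Set S, IsRelLeftIdeal K L ∧ ∀ L', IsRelLeftIdeal K L' → L' ⊆ L → L' = L) ∧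
  (∃ R : Set S, IsRelRightIdeal K R ∧ ∀ R', IsRelRightIdeal K R' → R' ⊆ R → R' = R)

/-- Green's `≤_R` preorder within the subsemigroup `K`: `a ≤_R b` iff `a ∈ b K¹`. -/
def relLeR {S : Type*} [Monoid S] (K : Set S) (a b : S) : Prop :=
  a = b ∨ ∃ k ∈ K, a = b * k

namespace FAaux

variable {S : Type*} [Monoid S]


variable {S : Type*} [Monoid S]

def lmul (a : S) : Set S := {x | ∃ s, x = s * a}

lemma lmul_leftIdeal (a : S) : IsLeftIdeal (lmul a) := by
  refine ⟨⟨a, 1, (one_mul a).symm⟩, ?_⟩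
  rintro x ⟨s, rfl⟩ t
  exact ⟨t * s, (mul_assoc t s a).symm⟩

lemma min_left_exists (V : Finset S) (hV : ∀ a : S, ∃ u ∈ V, ∃ v ∈ V, u * a = v) :
    ∃ v₀ : S, IsMinLeftIdeal (lmul v₀) := by
  have hVne : (V : Set S).Nonempty := by
    obtain ⟨u, hu, -⟩ := hV 1
    exact ⟨u, hu⟩
  obtain ⟨v₀, hv₀, hmin⟩ := Set.Finite.exists_minimalFor (fun v : S => lmul v) (V : Set S)
    V.finite_toSet hVne
  -- every left ideal contains some lmul v, v ∈ V
  have key : ∀ L : Set S, IsLeftIdeal L → ∃ v ∈ V, lmul v ⊆ L := by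
    intro L hL
    obtain ⟨a, ha⟩ := hL.1
    obtain ⟨u, hu, v, hv, huv⟩ := hV a
    have hvL : v ∈ L := huv ▸ hL.2 a ha u
    exact ⟨v, hv, by rintro x ⟨s, rfl⟩; exact hL.2 v hvL s⟩
  refine ⟨v₀, lmul_leftIdeal v₀, ?_⟩
  intro L' hsub hL'
  obtain ⟨v, hv, hvL'⟩ := key L' hL'
  have hle : lmul v ⊆ lmul v₀ := hvL'.trans hsub
  have heq : lmul v₀ = lmul v := Set.Subset.antisymm (hmin hv hle) hle
  exact Set.Subset.antisymm hsub (heq.le.trans hvL')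

lemma pigeon (V : Finset S) (hV : ∀ a : S, ∃ u ∈ V, ∃ v ∈ V, u * a = v) (a : S)
    (ha : IsMinLeftIdeal (lmul a)) : ∃ r : ℕ, ∀ z ∈ lmul a, z * a ^ (r + 1) = z := by
  have hh : ∀ n : ℕ, ∃ p : S × S, p.1 ∈ V ∧ p.2 ∈ V ∧ p.1 * a ^ (n + 1) = p.2 := by
    intro n
    obtain ⟨u, hu, v, hv, huv⟩ := hV (a ^ (n + 1))
    exact ⟨(u, v), hu, hv, huv⟩
  choose g hg1 hg2 hg3 using hh
  have hmaps : Set.MapsTo g Set.univ ((V : Set S) ×ˢ (V : Set S)) :=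
    fun n _ => ⟨hg1 n, hg2 n⟩
  obtain ⟨m₀, -, n₀, -, hmn, hgeq₀⟩ := Set.infinite_univ.exists_ne_map_eq_of_mapsTo hmaps
    ((V.finite_toSet).prod (V.finite_toSet))
  obtain ⟨m, n, hlt, hgeq⟩ : ∃ m n : ℕ, m < n ∧ g m = g n := by
    rcases lt_or_gt_of_ne hmn with h | h
    exacts [⟨m₀, n₀, h, hgeq₀⟩, ⟨n₀, m₀, h, hgeq₀.symm⟩]
  obtain ⟨d, hd⟩ : ∃ d : ℕ, n - m = d + 1 := ⟨n - m - 1, by omega⟩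
  refine ⟨d, ?_⟩
  set x := (g m).2 with hx
  have h1 : (g m).1 * a ^ (m + 1) = x := hg3 m
  have h2 : (g m).1 * a ^ (n + 1) = x := by
    rw [hx, hgeq]; exact hg3 n
  have hxr : x * a ^ (d + 1) = x := by
    rw [← h1, mul_assoc, ← pow_add]
    have he' : m + 1 + (d + 1) = n + 1 := by omega
    rw [he', h2]
    exact h1.symm
  have hxmem : x ∈ lmul a := by
    refine ⟨(g m).1 * a ^ m, ?_⟩
    rw [mul_assoc, ← pow_succ]
    exact h1.symm
  have hsub : lmul x ⊆ lmul a := by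
    rintro y ⟨s, rfl⟩
    obtain ⟨t, ht⟩ := hxmem
    exact ⟨s * t, by rw [ht, mul_assoc]⟩
  have heq : lmul x = lmul a := ha.2 (lmul x) hsub (lmul_leftIdeal x)
  intro z hz
  rw [← heq] at hz
  obtain ⟨s, rfl⟩ := hz
  rw [mul_assoc, hxr]

lemma leftinv {L : Set S} (hL : IsMinLeftIdeal L) {e : S} (heL : e ∈ L) (hee : e * e = e)
    (t : S) (hte : t * e = t) : ∃ w : S, w * t = e := by
  have htL : t ∈ L := hte ▸ hL.1.2 e heL t
  have hsub : lmul t ⊆ L := by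
    rintro y ⟨s, rfl⟩
    exact hL.1.2 t htL s
  have heq : lmul t = L := hL.2 (lmul t) hsub (lmul_leftIdeal t)
  have heLt : e ∈ lmul t := by rw [heq]; exact heL
  obtain ⟨s, hs⟩ := heLt
  exact ⟨e * s, by rw [mul_assoc, ← hs, hee]⟩


theorem fwd (V : Finset S)
    (hV : ∀ a : S, ∃ u ∈ V, ∃ v ∈ V, u * a = v) :
    (∃ K : Set S, IsMinIdeal K ∧ IsCompletelySimple K ∧
      ∀ a ∈ K, {b ∈ K | relLeR K a b ∧ relLeR K b a}.Finite) := by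
  classical
  obtain ⟨v₀, hmin₀⟩ := min_left_exists V hV
  obtain ⟨r₀, hr₀⟩ := pigeon V hV v₀ hmin₀
  set e := v₀ ^ (r₀ + 1) with he_def
  have hv₀L : v₀ ∈ lmul v₀ := ⟨1, (one_mul v₀).symm⟩
  have heL : e ∈ lmul v₀ := ⟨v₀ ^ r₀, pow_succ v₀ r₀⟩
  have hee : e * e = e := hr₀ e heL
  set K : Set S := {x : S | ∃ s t : S, x = s * v₀ * t} with hK_def
  have hv₀K : v₀ ∈ K := ⟨1, 1, by simp⟩
  have hKl : ∀ x ∈ K, ∀ s : S, s * x ∈ K := by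
    rintro x ⟨p, q, rfl⟩ s
    exact ⟨s * p, q, by simp [mul_assoc]⟩
  have hKr : ∀ x ∈ K, ∀ s : S, x * s ∈ K := by
    rintro x ⟨p, q, rfl⟩ s
    exact ⟨p, q * s, by simp [mul_assoc]⟩
  have hKideal : IsIdeal K := ⟨⟨v₀, hv₀K⟩, fun x hx s => ⟨hKl x hx s, hKr x hx s⟩⟩
  have hLK : lmul v₀ ⊆ K := by
    rintro x ⟨s, rfl⟩
    exact ⟨s, 1, (mul_one _).symm⟩
  have heK : e ∈ K := hLK heL
  -- K is the minimal ideal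
  have hKmin : ∀ I : Set S, IsIdeal I → K ⊆ I := by
    intro I hI
    have hLI : lmul v₀ ⊆ I := by
      obtain ⟨a₀, ha₀⟩ := hI.1
      have hli : IsLeftIdeal (lmul v₀ ∩ I) := by
        refine ⟨⟨a₀ * v₀, ⟨a₀, rfl⟩, (hI.2 a₀ ha₀ v₀).2⟩, ?_⟩
        rintro x ⟨⟨s, rfl⟩, hxI⟩ t
        exact ⟨⟨t * s, (mul_assoc t s v₀).symm⟩, (hI.2 _ hxI t).1⟩
      have heqLI := hmin₀.2 _ Set.inter_subset_left hli
      intro y hy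
      have hy' : y ∈ lmul v₀ ∩ I := by rw [heqLI]; exact hy
      exact hy'.2
    rintro x ⟨s, t, rfl⟩
    exact (hI.2 (s * v₀) (hLI ⟨s, rfl⟩) t).2
  -- every element of K generates a minimal left ideal
  have hDmin : ∀ b ∈ K, IsMinLeftIdeal (lmul b) := by
    rintro b ⟨p, q, rfl⟩
    set Lq : Set S := {x : S | ∃ y ∈ lmul v₀, x = y * q} with hLq_def
    have hLq_left : IsLeftIdeal Lq := by
      refine ⟨⟨v₀ * q, v₀, hv₀L, rfl⟩, ?_⟩
      rintro x ⟨y, hy, rfl⟩ s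
      exact ⟨s * y, hmin₀.1.2 y hy s, (mul_assoc s y q).symm⟩
    have hLq_min : ∀ L' ⊆ Lq, IsLeftIdeal L' → L' = Lq := by
      intro L' hsub hL'
      have hP : IsLeftIdeal {x | x ∈ lmul v₀ ∧ x * q ∈ L'} := by
        refine ⟨?_, ?_⟩
        · obtain ⟨z, hz⟩ := hL'.1
          obtain ⟨y, hy, rfl⟩ := hsub hz
          exact ⟨y, hy, hz⟩
        · rintro x ⟨hx1, hx2⟩ s
          refine ⟨hmin₀.1.2 x hx1 s, ?_⟩
          rw [mul_assoc]
          exact hL'.2 _ hx2 s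
      have hPeq := hmin₀.2 _ (fun x hx => hx.1) hP
      apply Set.Subset.antisymm hsub
      rintro x ⟨y, hy, rfl⟩
      have hy' : y ∈ {x | x ∈ lmul v₀ ∧ x * q ∈ L'} := by rw [hPeq]; exact hy
      exact hy'.2
    have hsub2 : lmul (p * v₀ * q) ⊆ Lq := by
      rintro x ⟨s, rfl⟩
      exact ⟨s * (p * v₀), ⟨s * p, (mul_assoc s p v₀).symm⟩, by simp [mul_assoc]⟩
    have heq2 : lmul (p * v₀ * q) = Lq := hLq_min _ hsub2 (lmul_leftIdeal _)
    rw [IsMinLeftIdeal, heq2]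
    exact ⟨hLq_left, hLq_min⟩
  -- simplicity
  have hsimple : ∀ I : Set S, IsRelIdeal K I → I = K := by
    rintro I ⟨⟨a, haI⟩, hIK, habs⟩
    refine Set.Subset.antisymm hIK ?_
    intro x hxK
    have hKaK : IsIdeal {y : S | ∃ p ∈ K, ∃ q ∈ K, y = p * a * q} := by
      refine ⟨⟨v₀ * a * v₀, v₀, hv₀K, v₀, hv₀K, rfl⟩, ?_⟩
      rintro y ⟨p, hp, q, hq, rfl⟩ s
      constructor
      · exact ⟨s * p, hKl p hp s, q, hq, by simp [mul_assoc]⟩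
      · exact ⟨p, hp, q * s, hKr q hq s, by simp [mul_assoc]⟩
    obtain ⟨p, hp, q, hq, rfl⟩ := hKmin _ hKaK hxK
    exact (habs _ (habs a haI p hp).1 q hq).2
  -- minimal relative left ideal
  have hrelL : IsRelLeftIdeal K (lmul v₀) :=
    ⟨⟨v₀, hv₀L⟩, hLK, fun x hx k _ => hmin₀.1.2 x hx k⟩
  have hrelLmin : ∀ L', IsRelLeftIdeal K L' → L' ⊆ lmul v₀ → L' = lmul v₀ := by
    intro L' hL' hsub
    obtain ⟨y₀, hy₀⟩ := hL'.1
    have hL'' : IsLeftIdeal {x : S | ∃ m ∈ K, ∃ y ∈ L', x = m * y} := by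
      refine ⟨⟨v₀ * y₀, v₀, hv₀K, y₀, hy₀, rfl⟩, ?_⟩
      rintro x ⟨m, hm, y, hy, rfl⟩ s
      exact ⟨s * m, hKl m hm s, y, hy, (mul_assoc s m y).symm⟩
    have hsub'' : {x : S | ∃ m ∈ K, ∃ y ∈ L', x = m * y} ⊆ lmul v₀ := by
      rintro x ⟨m, hm, y, hy, rfl⟩
      exact hsub (hL'.2.2 y hy m hm)
    have heq'' := hmin₀.2 _ hsub'' hL''
    refine Set.Subset.antisymm hsub ?_
    intro x hx
    have hx' : x ∈ {x : S | ∃ m ∈ K, ∃ y ∈ L', x = m * y} := by rw [heq'']; exact hx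
    obtain ⟨m, hm, y, hy, rfl⟩ := hx'
    exact hL'.2.2 y hy m hm
  -- minimal relative right ideal : eK
  set R₀ : Set S := {x : S | ∃ m ∈ K, x = e * m} with hR₀_def
  have hR₀_rel : IsRelRightIdeal K R₀ := by
    refine ⟨⟨e, e, heK, hee.symm⟩, ?_, ?_⟩
    · rintro x ⟨m, hm, rfl⟩
      exact hKl m hm e
    · rintro x ⟨m, hm, rfl⟩ k hk
      exact ⟨m * k, hKr m hm k, mul_assoc e m k⟩
  have hR₀_min : ∀ R', IsRelRightIdeal K R' → R' ⊆ R₀ → R' = R₀ := by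
    intro R' hR' hsub
    obtain ⟨b, hbR'⟩ := hR'.1
    have hbK : b ∈ K := hR'.2.1 hbR'
    obtain ⟨k₀, hk₀, hbek⟩ := hsub hbR'
    have heb : e * b = b := by rw [hbek, ← mul_assoc, hee]
    have hKbK : IsIdeal {y : S | ∃ p ∈ K, ∃ q ∈ K, y = p * b * q} := by
      refine ⟨⟨v₀ * b * v₀, v₀, hv₀K, v₀, hv₀K, rfl⟩, ?_⟩
      rintro y ⟨p, hp, q, hq, rfl⟩ s
      constructor
      · exact ⟨s * p, hKl p hp s, q, hq, by simp [mul_assoc]⟩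
      · exact ⟨p, hp, q * s, hKr q hq s, by simp [mul_assoc]⟩
    obtain ⟨x, hx, y, hy, hexy⟩ := hKmin _ hKbK heK
    -- hexy : e = x * b * y
    set g : S := b * y * e * x with hg_def
    have hxbyw : ∀ w : S, x * (b * (y * w)) = e * w := by
      intro w
      rw [hexy]
      simp [mul_assoc]
    have hgg : g * g = g := by
      simp only [hg_def, mul_assoc]
      have h6 : e * (e * (e * x)) = e * x := by
        rw [← mul_assoc, hee, ← mul_assoc, hee]
      rw [hxbyw (e * x), h6]
    have heg : e * g = g := by
      simp only [hg_def, mul_assoc]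
      rw [← mul_assoc e b, heb]
    have hgee : g * e * (g * e) = g * e := by
      calc g * e * (g * e) = g * (e * g * e) := by simp [mul_assoc]
        _ = g * (g * e) := by rw [heg]
        _ = g * g * e := by rw [← mul_assoc]
        _ = g * e := by rw [hgg]
    have hhe : (g * e) * e = g * e := by rw [mul_assoc, hee]
    obtain ⟨w, hw⟩ := leftinv hmin₀ heL hee (g * e) hhe
    have hge_e : g * e = e := by
      calc g * e = e * (g * e) := by rw [← mul_assoc, heg]
        _ = (w * (g * e)) * (g * e) := by rw [hw]
        _ = w * ((g * e) * (g * e)) := by rw [mul_assoc]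
        _ = w * (g * e) := by rw [hgee]
        _ = e := hw
    have hebK : e = b * (y * (e * (x * e))) := by
      calc e = g * e := hge_e.symm
        _ = b * (y * (e * (x * e))) := by simp [hg_def, mul_assoc]
    have hmK : y * (e * (x * e)) ∈ K := hKl _ (hKl _ (hKr x hx e) e) y
    have heR' : e ∈ R' := by
      have h5 := hR'.2.2 b hbR' _ hmK
      rw [← hebK] at h5
      exact h5
    refine Set.Subset.antisymm hsub ?_
    rintro z ⟨m, hm, rfl⟩
    exact hR'.2.2 e heR' m hm
  -- finiteness of R-classes
  have hfinR : ∀ a ∈ K, {b ∈ K | relLeR K a b ∧ relLeR K b a}.Finite := by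
    intro a haK
    have hminA := hDmin a haK
    obtain ⟨r, hzf⟩ := pigeon V hV a hminA
    set f := a ^ (r + 1) with hf_def
    have hfL : f ∈ lmul a := ⟨a ^ r, pow_succ a r⟩
    have hff : f * f = f := hzf f hfL
    have haf : a * f = a := hzf a ⟨1, (one_mul a).symm⟩
    have hfa : f * a = a := by
      calc f * a = a ^ (r + 1 + 1) := (pow_succ a (r + 1)).symm
        _ = a * a ^ (r + 1) := pow_succ' a (r + 1)
        _ = a := haf
    have hfb : ∀ b : S, relLeR K b a → f * b = b := by
      rintro b (rfl | ⟨m, hm, rfl⟩)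
      · exact hfa
      · rw [← mul_assoc, hfa]
    set inv : S → S := fun t => if h : ∃ w : S, w * t = f then h.choose else 1 with hinv_def
    have hsubim : {b ∈ K | relLeR K a b ∧ relLeR K b a} ⊆
        (fun p : S × S => inv (f * p.1 * f) * (f * p.2)) '' ((V : Set S) ×ˢ (V : Set S)) := by
      rintro b ⟨hbK, hab, hba⟩
      obtain ⟨u, hu, v, hv, huv⟩ := hV b
      refine ⟨(u, v), ⟨hu, hv⟩, ?_⟩
      have hft : (f * u * f) * f = f * u * f := by rw [mul_assoc, hff]
      have hex : ∃ w : S, w * (f * u * f) = f := leftinv hminA hfL hff (f * u * f) hft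
      have hinvt : inv (f * u * f) = hex.choose := dif_pos hex
      have htb : (f * u * f) * b = f * v := by
        calc (f * u * f) * b = f * u * (f * b) := by rw [mul_assoc]
          _ = f * (u * b) := by rw [hfb b hba, mul_assoc]
          _ = f * v := by rw [huv]
      show inv (f * u * f) * (f * v) = b
      rw [hinvt, ← htb, ← mul_assoc, hex.choose_spec]
      exact hfb b hba
    exact (((V.finite_toSet).prod (V.finite_toSet)).image _).subset hsubim
  exact ⟨K, ⟨hKideal, hKmin⟩, ⟨hsimple, ⟨lmul v₀, hrelL, hrelLmin⟩, ⟨R₀, hR₀_rel, hR₀_min⟩⟩, hfinR⟩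


theorem bwd
    (h : ∃ K : Set S, IsMinIdeal K ∧ IsCompletelySimple K ∧
      ∀ a ∈ K, {b ∈ K | relLeR K a b ∧ relLeR K b a}.Finite) :
    ∃ V : Finset S, ∀ a : S, ∃ u ∈ V, ∃ v ∈ V, u * a = v := by
  classical
  obtain ⟨K, ⟨hKid, -⟩, ⟨-, ⟨L, hL, hLmin⟩, ⟨R, hR, hRmin⟩⟩, hfin⟩ := h
  obtain ⟨r, hrR⟩ := hR.1
  obtain ⟨l, hlL⟩ := hL.1
  have hrK : r ∈ K := hR.2.1 hrR
  have hlK : l ∈ K := hL.2.1 hlL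
  set a := r * l with ha_def
  have haR : a ∈ R := hR.2.2 r hrR l hlK
  have haL : a ∈ L := hL.2.2 l hlL r hrK
  have haK : a ∈ K := hL.2.1 haL
  -- K a = L
  have hKa_eq : {x : S | ∃ m ∈ K, x = m * a} = L := by
    refine hLmin _ ⟨⟨a * a, a, haK, rfl⟩, ?_, ?_⟩ ?_
    · rintro x ⟨m, hm, rfl⟩
      exact (hKid.2 a haK m).1
    · rintro x ⟨m, hm, rfl⟩ k hk
      exact ⟨k * m, (hKid.2 m hm k).1, (mul_assoc k m a).symm⟩
    · rintro x ⟨m, hm, rfl⟩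
      exact hL.2.2 a haL m hm
  have hlKa : l ∈ {x : S | ∃ m ∈ K, x = m * a} := by rw [hKa_eq]; exact hlL
  obtain ⟨k, hkK, hlka⟩ := hlKa
  -- a K = R
  have haK_eq : {x : S | ∃ m ∈ K, x = a * m} = R := by
    refine hRmin _ ⟨⟨a * a, a, haK, rfl⟩, ?_, ?_⟩ ?_
    · rintro x ⟨m, hm, rfl⟩
      exact (hKid.2 a haK m).2
    · rintro x ⟨m, hm, rfl⟩ k' hk'
      exact ⟨m * k', (hKid.2 m hm k').2, mul_assoc a m k'⟩
    · rintro x ⟨m, hm, rfl⟩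
      exact hR.2.2 a haR m hm
  have hrKa : r ∈ {x : S | ∃ m ∈ K, x = a * m} := by rw [haK_eq]; exact hrR
  obtain ⟨k', hk'K, hrak'⟩ := hrKa
  set e := k * r with he_def
  have h3 : k * r = l * k' := by
    rw [hrak', ← mul_assoc, ← hlka]
  have hee : e * e = e := by
    show (k * r) * (k * r) = k * r
    nth_rewrite 2 [h3]
    calc (k * r) * (l * k') = k * ((r * l) * k') := by simp [mul_assoc]
      _ = k * (a * k') := by rw [← ha_def]
      _ = k * r := by rw [← hrak']
  have heK : e ∈ K := (hKid.2 r hrK k).1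
  -- k R is a minimal relative right ideal
  set kR : Set S := {x : S | ∃ y ∈ R, x = k * y} with hkR_def
  have hkR_rel : IsRelRightIdeal K kR := by
    refine ⟨⟨k * r, r, hrR, rfl⟩, ?_, ?_⟩
    · rintro x ⟨y, hy, rfl⟩
      exact (hKid.2 y (hR.2.1 hy) k).1
    · rintro x ⟨y, hy, rfl⟩ m hm
      exact ⟨y * m, hR.2.2 y hy m hm, mul_assoc k y m⟩
  have hkR_min : ∀ R', IsRelRightIdeal K R' → R' ⊆ kR → R' = kR := by
    intro R' hR' hsub
    have hPeq : {y : S | y ∈ R ∧ k * y ∈ R'} = R := by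
      refine hRmin _ ⟨?_, fun y hy => hR.2.1 hy.1, ?_⟩ (fun y hy => hy.1)
      · obtain ⟨z, hz⟩ := hR'.1
        obtain ⟨y, hy, rfl⟩ := hsub hz
        exact ⟨y, hy, hz⟩
      · rintro y ⟨hy1, hy2⟩ m hm
        refine ⟨hR.2.2 y hy1 m hm, ?_⟩
        rw [← mul_assoc]
        exact hR'.2.2 _ hy2 m hm
    refine Set.Subset.antisymm hsub ?_
    rintro x ⟨y, hy, rfl⟩
    have hy' : y ∈ {y : S | y ∈ R ∧ k * y ∈ R'} := by rw [hPeq]; exact hy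
    exact hy'.2
  have he_kR : e ∈ kR := ⟨r, hrR, rfl⟩
  -- e K = k R
  set eK : Set S := {x : S | ∃ m ∈ K, x = e * m} with heK_def
  have heK_rel : IsRelRightIdeal K eK := by
    refine ⟨⟨e * e, e, heK, rfl⟩, ?_, ?_⟩
    · rintro x ⟨m, hm, rfl⟩
      exact (hKid.2 m hm e).1
    · rintro x ⟨m, hm, rfl⟩ k'' hk''
      exact ⟨m * k'', (hKid.2 m hm k'').2, mul_assoc e m k''⟩
  have heK_eq : eK = kR := by
    refine hkR_min eK heK_rel ?_
    rintro x ⟨m, hm, rfl⟩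
    exact hkR_rel.2.2 e he_kR m hm
  have hdiv : ∀ x ∈ eK, ∃ m ∈ K, e = x * m := by
    intro x hx
    have hxkR : x ∈ kR := by rw [← heK_eq]; exact hx
    have hxK : x ∈ K := hkR_rel.2.1 hxkR
    have hxK_eq : {y : S | ∃ m ∈ K, y = x * m} = kR := by
      refine hkR_min _ ⟨⟨x * x, x, hxK, rfl⟩, ?_, ?_⟩ ?_
      · rintro y ⟨m, hm, rfl⟩
        exact (hKid.2 m hm x).1
      · rintro y ⟨m, hm, rfl⟩ k'' hk''
        exact ⟨m * k'', (hKid.2 m hm k'').2, mul_assoc x m k''⟩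
      · rintro y ⟨m, hm, rfl⟩
        exact hkR_rel.2.2 x hxkR m hm
    have he' : e ∈ {y : S | ∃ m ∈ K, y = x * m} := by rw [hxK_eq]; exact he_kR
    exact he'
  have hsub_class : eK ⊆ {b ∈ K | relLeR K e b ∧ relLeR K b e} := by
    intro x hx
    obtain ⟨m, hm, hxm⟩ := hx
    refine ⟨?_, Or.inr (hdiv _ ⟨m, hm, hxm⟩), Or.inr ⟨m, hm, hxm⟩⟩
    rw [hxm]
    exact (hKid.2 m hm e).1
  have heeK : e ∈ eK := ⟨e, heK, hee.symm⟩
  have hfinK : eK.Finite := (hfin e heK).subset hsub_class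
  refine ⟨hfinK.toFinset, ?_⟩
  intro s
  refine ⟨e, hfinK.mem_toFinset.2 heeK, e * s, hfinK.mem_toFinset.2 ?_, rfl⟩
  refine ⟨e * s, (hKid.2 e heK s).2, ?_⟩
  rw [← mul_assoc, hee]

end FAaux

/-- A monoid is finitely absorbed iff it has a completely simple minimal ideal whose
`R`-classes are all finite. -/
theorem finitely_absorbed_iff_completely_simple_min_ideal_finite_R_classes
    {S : Type*} [Monoid S] :
    (∃ V : Finset S, ∀ a : S, ∃ u ∈ V, ∃ v ∈ V, u * a = v) ↔
    (∃ K : Set S, IsMinIdeal K ∧ IsCompletelySimple K ∧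
      ∀ a ∈ K, {b ∈ K | relLeR K a b ∧ relLeR K b a}.Finite) := by
  constructor
  · rintro ⟨V, hV⟩
    exact FAaux.fwd V hV
  · exact FAaux.bwd
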